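/- Let 𝒰 be the Duarte family {{e₂,−e₂}, {−e₁,e₂}, {−e₁,−e₂}} and y = e₂ ∈ 𝒮(𝒰). Then for every L ≥ 1, every segment Y of L consecutive points of l_y, and every configuration η ∈ {+,−}^Y, one has Σ_{v∈η⁺} r_v(η) ≤ Σ_{u∈η⁻} r_u(η). (In particular, e₂ is a fair direction for the Duarte family.) -/

import Mathlib

open scoped BigOperators

/-- Points of the plane lattice ℤ². -/
abbrev Pt : Type := ℤ × ℤ

noncomputable section

/-- Inner product of an integer point with a real vector. -/
def dotIR (x : Pt) (u : ℝ × ℝ) : ℝ := (x.1 : ℝ) * u.1 + (x.2 : ℝ) * u.2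

/-- Inner product of two real vectors. -/
def dotRR (u v : ℝ × ℝ) : ℝ := u.1 * v.1 + u.2 * v.2

/-- The unit circle S¹ ⊆ ℝ². -/
def unitCircle : Set (ℝ × ℝ) := {u | u.1 ^ 2 + u.2 ^ 2 = 1}

/-- The discrete half-plane H_u = {x ∈ ℤ² : ⟨x,u⟩ < 0}. -/
def halfPlane (u : ℝ × ℝ) : Set Pt := {x | dotIR x u < 0}

/-- An update family: a finite nonempty family of finite subsets of ℤ²∖{0}. -/
def UpdateFamily (𝒰 : Finset (Finset Pt)) : Prop :=
  𝒰.Nonempty ∧ ∀ X ∈ 𝒰, (0 : Pt) ∉ X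

/-- One step of 𝒰-bootstrap percolation. -/
def bootStep (𝒰 : Finset (Finset Pt)) (A : Set Pt) : Set Pt :=
  A ∪ {x : Pt | ∃ X ∈ 𝒰, ∀ v ∈ X, x + v ∈ A}

/-- Iterates of 𝒰-bootstrap percolation. -/
def bootIter (𝒰 : Finset (Finset Pt)) : ℕ → Set Pt → Set Pt
  | 0, A => A
  | n + 1, A => bootStep 𝒰 (bootIter 𝒰 n A)

/-- The 𝒰-bootstrap closure [A] = ⋃_t A_t. -/
def bootClosure (𝒰 : Finset (Finset Pt)) (A : Set Pt) : Set Pt :=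
  ⋃ n : ℕ, bootIter 𝒰 n A

/-- The stable set 𝒮(𝒰) = {u ∈ S¹ : X ⊄ H_u for all X ∈ 𝒰}. -/
def stableSet (𝒰 : Finset (Finset Pt)) : Set (ℝ × ℝ) :=
  {u | u ∈ unitCircle ∧ ∀ X ∈ 𝒰, ¬((X : Set Pt) ⊆ halfPlane u)}

/-- A rational direction: u = z/‖z‖ for some z ∈ ℤ²∖{0}. -/
def IsRationalDir (u : ℝ × ℝ) : Prop :=
  ∃ z : Pt, z ≠ 0 ∧
    u = ((z.1 : ℝ) / Real.sqrt ((z.1 : ℝ) ^ 2 + (z.2 : ℝ) ^ 2),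
         (z.2 : ℝ) / Real.sqrt ((z.1 : ℝ) ^ 2 + (z.2 : ℝ) ^ 2))

/-- Critical family: some (closed) semicircle meets 𝒮(𝒰) in a finite set and every open
semicircle meets 𝒮(𝒰). -/
def Critical (𝒰 : Finset (Finset Pt)) : Prop :=
  (∃ u ∈ unitCircle, (stableSet 𝒰 ∩ {w | 0 ≤ dotRR u w}).Finite) ∧
  ∀ u ∈ unitCircle, (stableSet 𝒰 ∩ {w | 0 < dotRR u w}).Nonempty

/-- Supercritical family: some open semicircle is disjoint from 𝒮(𝒰). -/
def Supercritical (𝒰 : Finset (Finset Pt)) : Prop :=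
  ∃ u ∈ unitCircle, stableSet 𝒰 ∩ {w | 0 < dotRR u w} = ∅

/-- Subcritical family: every semicircle has infinite intersection with 𝒮(𝒰). -/
def Subcritical (𝒰 : Finset (Finset Pt)) : Prop :=
  ∀ u ∈ unitCircle, (stableSet 𝒰 ∩ {w | 0 ≤ dotRR u w}).Infinite

/-- The translated half-plane H_u + a. -/
def translHalfPlane (u : ℝ × ℝ) (a : Pt) : Set Pt := {x | dotIR (x - a) u < 0}

/-- A 𝒯-droplet: a nonempty intersection ⋂_{u ∈ 𝒯} (H_u + a_u). -/
def IsDroplet (𝒯 : Finset (ℝ × ℝ)) (D : Set Pt) : Prop :=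
  D.Nonempty ∧ ∃ a : (ℝ × ℝ) → Pt, D = ⋂ u ∈ 𝒯, translHalfPlane u (a u)

/-- Euclidean distance between two lattice points. -/
def edist2 (x y : Pt) : ℝ :=
  Real.sqrt (((x.1 : ℝ) - (y.1 : ℝ)) ^ 2 + ((x.2 : ℝ) - (y.2 : ℝ)) ^ 2)

/-- Diameter of a set of lattice points (w.r.t. the Euclidean distance). -/
def diam (D : Set Pt) : ℝ :=
  sSup {d : ℝ | ∃ x ∈ D, ∃ y ∈ D, d = edist2 x y}

/-- Translate of a set of lattice points. -/
def translatePt (a : Pt) (D : Set Pt) : Set Pt := (fun x => a + x) '' D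

/-- The initial collection of the covering algorithm: one copy of D̂ per element of A. -/
def initColl (Dhat : Set Pt) (A : Finset Pt) : Multiset (Set Pt) :=
  A.val.map (fun a => translatePt a Dhat)

/-- Two sets lie within Euclidean distance κ of each other. -/
def DropletsClose (κ : ℝ) (D E : Set Pt) : Prop :=
  ∃ x ∈ D, ∃ y ∈ E, edist2 x y ≤ κ

/-- D is the smallest 𝒯-droplet containing S. -/
def SmallestDroplet (𝒯 : Finset (ℝ × ℝ)) (S : Set Pt) (D : Set Pt) : Prop :=
  IsDroplet 𝒯 D ∧ S ⊆ D ∧ ∀ D' : Set Pt, IsDroplet 𝒯 D' → S ⊆ D' → D ⊆ D'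

/-- One merging step of the covering algorithm. -/
def MergeStep (κ : ℝ) (𝒯 : Finset (ℝ × ℝ)) (C C' : Multiset (Set Pt)) : Prop :=
  ∃ (D₁ D₂ D₃ : Set Pt) (C₀ : Multiset (Set Pt)),
    C = D₁ ::ₘ D₂ ::ₘ C₀ ∧ DropletsClose κ D₁ D₂ ∧
    SmallestDroplet 𝒯 (D₁ ∪ D₂) D₃ ∧ C' = D₃ ::ₘ C₀

/-- A terminal collection: all pairwise distances exceed κ. -/
def TerminalColl (κ : ℝ) (C : Multiset (Set Pt)) : Prop :=
  ∀ (D₁ D₂ : Set Pt) (C₀ : Multiset (Set Pt)),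
    C = D₁ ::ₘ D₂ ::ₘ C₀ → ¬ DropletsClose κ D₁ D₂

/-- D̂ is a valid base droplet for the covering algorithm with parameter κ:
a finite 𝒯-droplet containing 0 with κ/2 ≤ diam(D̂) ≤ κ. -/
def GoodBase (κ : ℝ) (𝒯 : Finset (ℝ × ℝ)) (Dhat : Set Pt) : Prop :=
  IsDroplet 𝒯 Dhat ∧ Dhat.Finite ∧ (0 : Pt) ∈ Dhat ∧ κ / 2 ≤ diam Dhat ∧ diam Dhat ≤ κ

/-- The collection C is reachable by the covering algorithm started from A. -/
def Reachable (κ : ℝ) (𝒯 : Finset (ℝ × ℝ)) (Dhat : Set Pt) (A : Finset Pt)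
    (C : Multiset (Set Pt)) : Prop :=
  Relation.ReflTransGen (MergeStep κ 𝒯) (initColl Dhat A) C

/-- A droplet is covered by A if it belongs to some collection arising during some
execution of the covering algorithm. -/
def CoveredBy (κ : ℝ) (𝒯 : Finset (ℝ × ℝ)) (Dhat : Set Pt) (A : Finset Pt)
    (D : Set Pt) : Prop :=
  ∃ C : Multiset (Set Pt), Reachable κ 𝒯 Dhat A C ∧ D ∈ C

/-- The lattice line l_y = {x ∈ ℤ² : ⟨x,y⟩ = 0}. -/
def lineLat (y : ℝ × ℝ) : Set Pt := {x | dotIR x y = 0}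

/-- w generates the rank-one lattice l_y. -/
def GeneratesLine (w : Pt) (y : ℝ × ℝ) : Prop :=
  lineLat y = Set.range (fun k : ℤ => ((k * w.1, k * w.2) : Pt))

/-- The segment Y = {z₀ + j·w : 0 ≤ j < L} of L consecutive points of l_y. -/
def segmentY (z₀ w : Pt) (L : ℕ) : Finset Pt :=
  (Finset.range L).image (fun j : ℕ => ((z₀.1 + (j : ℤ) * w.1, z₀.2 + (j : ℤ) * w.2) : Pt))

open Classical in
/-- The configuration of ℤ² determined by η ∈ {+,−}^Y: state − (false) on H_y, the values of η
on Y, and + (true) elsewhere. -/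
def sigmaCfg (y : ℝ × ℝ) (Y : Finset Pt) (η : Pt → Bool) (x : Pt) : Bool :=
  if x ∈ halfPlane y then false else if x ∈ Y then η x else true

/-- r_v(η): the number of rules X ∈ 𝒰 such that every point of v + X has state opposite
to that of v (in the configuration σ_η). -/
def rval (𝒰 : Finset (Finset Pt)) (y : ℝ × ℝ) (Y : Finset Pt) (η : Pt → Bool) (v : Pt) : ℕ :=
  {X : Finset Pt | X ∈ 𝒰 ∧ ∀ p ∈ X, sigmaCfg y Y η (v + p) = !(sigmaCfg y Y η v)}.ncard

/-- η with the state at v flipped. -/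
def flipAt (η : Pt → Bool) (v : Pt) : Pt → Bool := fun x => if x = v then !(η x) else η x

/-- The generator 𝕍 of the restricted 1-dimensional 𝒰-voter dynamics on Y. -/
def genV (𝒰 : Finset (Finset Pt)) (y : ℝ × ℝ) (Y : Finset Pt)
    (g : (Pt → Bool) → ℝ) (η : Pt → Bool) : ℝ :=
  ∑ v ∈ Y, ((rval 𝒰 y Y η v : ℝ) / (𝒰.card : ℝ)) * (g (flipAt η v) - g η)

/-- The natural projection ℤ² → ℤ²_n. -/
def torusProj (n : ℕ) (v : Pt) : ZMod n × ZMod n := ((v.1 : ZMod n), (v.2 : ZMod n))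

/-- One step of 𝒰-bootstrap percolation on the torus ℤ²_n. -/
def torusStep (n : ℕ) (𝒰 : Finset (Finset Pt)) (A : Set (ZMod n × ZMod n)) :
    Set (ZMod n × ZMod n) :=
  A ∪ {x | ∃ X ∈ 𝒰, ∀ v ∈ X, x + torusProj n v ∈ A}

/-- Iterates of 𝒰-bootstrap percolation on the torus. -/
def torusIter (n : ℕ) (𝒰 : Finset (Finset Pt)) :
    ℕ → Set (ZMod n × ZMod n) → Set (ZMod n × ZMod n)
  | 0, A => A
  | t + 1, A => torusStep n 𝒰 (torusIter n 𝒰 t A)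

/-- The 𝒰-bootstrap closure on the torus. -/
def torusClosure (n : ℕ) (𝒰 : Finset (Finset Pt)) (A : Set (ZMod n × ZMod n)) :
    Set (ZMod n × ZMod n) :=
  ⋃ t : ℕ, torusIter n 𝒰 t A

open Classical in
/-- ℙ_p([A] = ℤ²_n) for a p-random subset A of ℤ²_n (Bernoulli product measure written as
a finite sum over configurations). -/
def percProb (n : ℕ) (𝒰 : Finset (Finset Pt)) (p : ℝ) : ℝ :=
  if h : n = 0 then 0 else
    haveI : NeZero n := ⟨h⟩
    ∑ ω : ZMod n × ZMod n → Bool,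
      (if torusClosure n 𝒰 {x | ω x = true} = Set.univ then (1 : ℝ) else 0) *
        p ^ (Finset.univ.filter (fun x => ω x = true)).card *
        (1 - p) ^ (Finset.univ.filter (fun x => ω x = false)).card

/-- The critical probability p_c(ℤ²_n, 𝒰). -/
def pCrit (n : ℕ) (𝒰 : Finset (Finset Pt)) : ℝ :=
  sInf {p : ℝ | p ∈ Set.Icc (0 : ℝ) 1 ∧ 1 / 2 ≤ percProb n 𝒰 p}

/-- The point of S¹ at angle θ. -/
def circlePt (θ : ℝ) : ℝ × ℝ := (Real.cos θ, Real.sin θ)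

end

/-- The Duarte family {{e₂,−e₂}, {−e₁,e₂}, {−e₁,−e₂}}. -/
def Duarte : Finset (Finset Pt) :=
  {({(0, 1), (0, -1)} : Finset Pt), ({(-1, 0), (0, 1)} : Finset Pt),
    ({(-1, 0), (0, -1)} : Finset Pt)}

-- === auxiliary lemmas ===
open Finset

lemma key_aux (b : ℕ → Bool) : ∀ L : ℕ,
    ((range L).filter (fun j => b j = true ∧ 1 ≤ j ∧ b (j-1) = false)).card
      + (if 1 ≤ L ∧ b (L-1) = false then 1 else 0)
    ≤ ((range L).filter (fun j => b j = false ∧ (j = 0 ∨ b (j-1) = true))).card := by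
  intro L
  induction L with
  | zero => simp
  | succ n ih =>
    rw [Finset.range_add_one, Finset.filter_insert, Finset.filter_insert]
    have hnr : n ∉ range n := by simp
    set A := (range n).filter (fun j => b j = true ∧ 1 ≤ j ∧ b (j-1) = false) with hA
    set B := (range n).filter (fun j => b j = false ∧ (j = 0 ∨ b (j-1) = true)) with hB
    have hcA : (insert n A).card = A.card + 1 :=
      card_insert_of_notMem (fun h => hnr (mem_filter.mp h).1)
    have hcB : (insert n B).card = B.card + 1 :=
      card_insert_of_notMem (fun h => hnr (mem_filter.mp h).1)
    simp only [Nat.succ_sub_one]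
    rcases Nat.eq_zero_or_pos n with hn | hn
    · subst hn
      cases hb : b 0 <;> simp [hb, hA, hB]
    · have h1n : (1:ℕ) ≤ n := hn
      have hn0 : ¬ (n = 0) := by omega
      have h1n1 : (1:ℕ) ≤ n + 1 := by omega
      rcases Bool.eq_false_or_eq_true (b n) with hb | hb <;>
        rcases Bool.eq_false_or_eq_true (b (n-1)) with hb1 | hb1 <;>
        simp (config := { failIfUnchanged := false }) only [hb, hb1, h1n, hn0, h1n1,
          true_and, false_and, and_true,
          and_false, or_false, or_true, false_or, and_self, if_true, if_false,
          Bool.true_eq_false, Bool.false_eq_true, not_false_eq_true, le_refl,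
          true_or, hcA, hcB] at ih ⊢ <;> omega

lemma key (b : ℕ → Bool) (L : ℕ) :
    ((range L).filter (fun j => b j = true ∧ 1 ≤ j ∧ b (j-1) = false)).card
    ≤ ((range L).filter (fun j => b j = false ∧ (j = 0 ∨ b (j-1) = true))).card :=
  le_trans (Nat.le_add_right _ _) (key_aux b L)

lemma card_filter_rev (L : ℕ) (p q : ℕ → Prop) [DecidablePred p] [DecidablePred q]
    (h : ∀ j < L, (p j ↔ q (L-1-j))) :
    ((range L).filter p).card = ((range L).filter q).card := by
  apply Finset.card_bij' (fun j _ => L-1-j) (fun j _ => L-1-j)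
  · intro a ha
    simp only [mem_filter, mem_range] at ha ⊢
    exact ⟨by omega, ((h a ha.1).mp ha.2)⟩
  · intro a ha
    simp only [mem_filter, mem_range] at ha ⊢
    have := h (L-1-a) (by omega)
    rw [show L-1-(L-1-a) = a by omega] at this
    exact ⟨by omega, this.mpr ha.2⟩
  · intro a ha; simp only [mem_filter, mem_range] at ha; omega
  · intro a ha; simp only [mem_filter, mem_range] at ha; omega

lemma key' (b : ℕ → Bool) (L : ℕ) :
    ((range L).filter (fun j => b j = true ∧ j+1 < L ∧ b (j+1) = false)).card
    ≤ ((range L).filter (fun j => b j = false ∧ (j+1 = L ∨ b (j+1) = true))).card := by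
  have hA := card_filter_rev L
    (fun j => b j = true ∧ j+1 < L ∧ b (j+1) = false)
    (fun j => b (L-1-j) = true ∧ 1 ≤ j ∧ b (L-1-(j-1)) = false)
    (by
      intro j hj
      rcases Nat.lt_or_ge (j+1) L with h1 | h1
      · have e1 : L-1-(L-1-j) = j := by omega
        have e2 : L-1-(L-1-j-1) = j+1 := by omega
        simp only [e1, e2]
        constructor
        · rintro ⟨x, _, z⟩; exact ⟨x, by omega, z⟩
        · rintro ⟨x, _, z⟩; exact ⟨x, h1, z⟩
      · have h2 : ¬ (1 ≤ L-1-j) := by omega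
        simp [h2]; omega)
  have hB := card_filter_rev L
    (fun j => b j = false ∧ (j+1 = L ∨ b (j+1) = true))
    (fun j => b (L-1-j) = false ∧ (j = 0 ∨ b (L-1-(j-1)) = true))
    (by
      intro j hj
      have e1 : L-1-(L-1-j) = j := by omega
      rcases Nat.lt_or_ge (j+1) L with h1 | h1
      · have e2 : L-1-(L-1-j-1) = j+1 := by omega
        simp only [e1, e2]
        have c1 : ¬(j+1 = L) := by omega
        have c2 : ¬(L-1-j = 0) := by omega
        simp [c1, c2]
      · have h2 : L-1-j = 0 := by omega
        simp only [e1, h2]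
        have c1 : j+1 = L := by omega
        simp [c1, show j = L-1 by omega]
        exact fun _ => Or.inl (by omega))
  rw [hA, hB]
  exact key (fun i => b (L-1-i)) L

-- === main theorem ===

/-- y = e₂ is in 𝒮(Duarte) and the fairness inequality holds for every
configuration on every segment of l_y (so e₂ is a fair direction for the Duarte family). -/
theorem stmt17 :
    ((0, 1) : ℝ × ℝ) ∈ stableSet Duarte ∧
    ∀ L : ℕ, 1 ≤ L → ∀ z₀ w : Pt, z₀ ∈ lineLat ((0, 1) : ℝ × ℝ) →
      GeneratesLine w ((0, 1) : ℝ × ℝ) → ∀ η : Pt → Bool,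
        ∑ v ∈ (segmentY z₀ w L).filter (fun v => η v = true),
            rval Duarte ((0, 1) : ℝ × ℝ) (segmentY z₀ w L) η v ≤
        ∑ u ∈ (segmentY z₀ w L).filter (fun v => η v = false),
            rval Duarte ((0, 1) : ℝ × ℝ) (segmentY z₀ w L) η u := by
  have hhp : ∀ x : Pt, x ∈ halfPlane ((0,1) : ℝ × ℝ) ↔ x.2 < 0 := by
    intro x
    simp only [halfPlane, dotIR, Set.mem_setOf_eq, mul_zero, mul_one, zero_add]
    exact_mod_cast Iff.rfl
  constructor
  · refine ⟨by norm_num [unitCircle], ?_⟩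
    intro X hX hsub
    simp only [Duarte, Finset.mem_insert, Finset.mem_singleton] at hX
    rcases hX with rfl | rfl | rfl
    · have := hsub (show ((0,1) : Pt) ∈ _ by simp)
      rw [hhp] at this; omega
    · have := hsub (show ((0,1) : Pt) ∈ _ by simp)
      rw [hhp] at this; omega
    · have := hsub (show ((-1,0) : Pt) ∈ _ by simp)
      rw [hhp] at this; omega
  intro L hL z₀ w hz hgen η
  set y : ℝ × ℝ := ((0,1) : ℝ × ℝ) with hy
  set Y : Finset Pt := segmentY z₀ w L with hYdef
  -- basic facts about z₀ and w
  have hz2 : z₀.2 = 0 := by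
    simp only [lineLat, dotIR, Set.mem_setOf_eq, hy, mul_zero, mul_one, zero_add] at hz
    exact_mod_cast hz
  have hw : w.2 = 0 ∧ (w.1 = 1 ∨ w.1 = -1) := by
    have h10 : ((1,0) : Pt) ∈ lineLat y := by
      simp [lineLat, dotIR, hy]
    rw [hgen] at h10
    obtain ⟨k, hk⟩ := h10
    have hk1 : k * w.1 = 1 := congrArg Prod.fst hk
    have hk2 : k * w.2 = 0 := congrArg Prod.snd hk
    have hkne : k ≠ 0 := by rintro rfl; simp at hk1
    constructor
    · rcases mul_eq_zero.mp hk2 with h | h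
      · exact absurd h hkne
      · exact h
    · rcases Int.mul_eq_one_iff_eq_one_or_neg_one.mp hk1 with ⟨_, h⟩ | ⟨_, h⟩
      · exact Or.inl h
      · exact Or.inr h
  obtain ⟨hw2, hw1⟩ := hw
  set ε : ℤ := w.1 with hεdef
  set p : ℕ → Pt := fun j => (z₀.1 + (j:ℤ) * ε, 0) with hp
  have hYim : Y = (range L).image p := by
    rw [hYdef]
    unfold segmentY
    apply Finset.image_congr
    intro j _
    simp [hp, hz2, hw2, hεdef]
  have hmemY : ∀ x : Pt, x ∈ Y ↔ ∃ j < L, x = p j := by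
    intro x
    rw [hYim]
    simp only [Finset.mem_image, mem_range]
    constructor
    · rintro ⟨j, hj, rfl⟩; exact ⟨j, hj, rfl⟩
    · rintro ⟨j, hj, rfl⟩; exact ⟨j, hj, rfl⟩
  have hsnd : ∀ x ∈ Y, x.2 = 0 := by
    intro x hx
    obtain ⟨j, _, rfl⟩ := (hmemY x).mp hx
    rfl
  have hεne : ε ≠ 0 := by rcases hw1 with h | h <;> omega
  have hInj : ∀ j j' : ℕ, p j = p j' → j = j' := by
    intro j j' h
    have h1 : z₀.1 + (j:ℤ) * ε = z₀.1 + (j':ℤ) * ε := congrArg Prod.fst h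
    have h2 : (j:ℤ) * ε = (j':ℤ) * ε := by omega
    have := mul_right_cancel₀ hεne h2
    exact_mod_cast this
  -- sigma evaluation
  have hs1 : ∀ c : ℤ, sigmaCfg y Y η (c, 1) = true := by
    intro c
    have h1 : ((c,1) : Pt) ∉ halfPlane y := by rw [hhp]; omega
    have h2 : ((c,1) : Pt) ∉ Y := by
      intro h; have := hsnd _ h; simp at this
    simp [sigmaCfg, h1, h2]
  have hsm1 : ∀ c : ℤ, sigmaCfg y Y η (c, -1) = false := by
    intro c
    have h1 : ((c,-1) : Pt) ∈ halfPlane y := by rw [hhp]; omega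
    simp [sigmaCfg, h1]
  have hnhp0 : ∀ c : ℤ, ((c,0) : Pt) ∉ halfPlane y := by
    intro c; rw [hhp]; omega
  have hs0in : ∀ c : ℤ, ((c,0) : Pt) ∈ Y → sigmaCfg y Y η (c,0) = η (c,0) := by
    intro c hc; simp [sigmaCfg, hnhp0 c, hc]
  have hs0out : ∀ c : ℤ, ((c,0) : Pt) ∉ Y → sigmaCfg y Y η (c,0) = true := by
    intro c hc; simp [sigmaCfg, hnhp0 c, hc]
  -- rval computation
  have hrv : ∀ c : ℤ, ((c,0) : Pt) ∈ Y → rval Duarte y Y η (c,0) =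
      (if sigmaCfg y Y η (c-1,0) = !(η (c,0)) then 1 else 0) := by
    intro c hc
    have hv : sigmaCfg y Y η (c,0) = η (c,0) := hs0in c hc
    have e1 : ((c,0) : Pt) + (0,1) = (c,1) := by simp [Prod.ext_iff]
    have e2 : ((c,0) : Pt) + (0,-1) = (c,-1) := by simp [Prod.ext_iff]
    have e3 : ((c,0) : Pt) + (-1,0) = (c-1,0) := by
      simp [Prod.ext_iff]; omega
    have hchar : ∀ X : Finset Pt,
        (X ∈ Duarte ∧ ∀ q ∈ X, sigmaCfg y Y η ((c,0) + q) = !(sigmaCfg y Y η (c,0)))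
        ↔ ((X = ({(-1,0),(0,1)} : Finset Pt) ∧ η (c,0) = false ∧ sigmaCfg y Y η (c-1,0) = true)
          ∨ (X = ({(-1,0),(0,-1)} : Finset Pt) ∧ η (c,0) = true ∧ sigmaCfg y Y η (c-1,0) = false)) := by
      intro X
      constructor
      · rintro ⟨hX, hall⟩
        simp only [Duarte, Finset.mem_insert, Finset.mem_singleton] at hX
        rcases hX with rfl | rfl | rfl
        · have h1 := hall (0,1) (by simp)
          have h2 := hall (0,-1) (by simp)
          rw [e1, hs1, hv] at h1
          rw [e2, hsm1, hv] at h2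
          rw [← h1] at h2
          exact absurd h2 (by simp)
        · have h1 := hall (-1,0) (by simp)
          have h2 := hall (0,1) (by simp)
          rw [e3, hv] at h1
          rw [e1, hs1, hv] at h2
          have hη : η (c,0) = false := by
            cases hb : η (c,0)
            · rfl
            · rw [hb] at h2; simp at h2
          rw [hη] at h1
          exact Or.inl ⟨rfl, hη, by simpa using h1⟩
        · have h1 := hall (-1,0) (by simp)
          have h2 := hall (0,-1) (by simp)
          rw [e3, hv] at h1
          rw [e2, hsm1, hv] at h2
          have hη : η (c,0) = true := by
            cases hb : η (c,0)
            · rw [hb] at h2; simp at h2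
            · rfl
          rw [hη] at h1
          exact Or.inr ⟨rfl, hη, by simpa using h1⟩
      · rintro (⟨rfl, hη, hσ⟩ | ⟨rfl, hη, hσ⟩)
        · refine ⟨by simp [Duarte], ?_⟩
          intro q hq
          simp only [Finset.mem_insert, Finset.mem_singleton] at hq
          rcases hq with rfl | rfl
          · rw [e3, hσ, hv, hη]; rfl
          · rw [e1, hs1, hv, hη]; rfl
        · refine ⟨by simp [Duarte], ?_⟩
          intro q hq
          simp only [Finset.mem_insert, Finset.mem_singleton] at hq
          rcases hq with rfl | rfl
          · rw [e3, hσ, hv, hη]; rfl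
          · rw [e2, hsm1, hv, hη]; rfl
    unfold rval
    rcases Bool.eq_false_or_eq_true (η (c,0)) with hη | hη <;>
      rcases Bool.eq_false_or_eq_true (sigmaCfg y Y η (c-1,0)) with hσ | hσ
    · have hset : {X : Finset Pt | X ∈ Duarte ∧
          ∀ q ∈ X, sigmaCfg y Y η ((c,0) + q) = !(sigmaCfg y Y η (c,0))} = ∅ := by
        ext X
        simp only [Set.mem_setOf_eq, Set.mem_empty_iff_false, iff_false]
        rw [hchar X]
        simp [hη, hσ]
      rw [hset, Set.ncard_empty, hη, hσ]
      simp
    · have hset : {X : Finset Pt | X ∈ Duarte ∧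
          ∀ q ∈ X, sigmaCfg y Y η ((c,0) + q) = !(sigmaCfg y Y η (c,0))}
          = {({(-1,0),(0,-1)} : Finset Pt)} := by
        ext X
        simp only [Set.mem_setOf_eq, Set.mem_singleton_iff]
        rw [hchar X]
        simp [hη, hσ]
      rw [hset, Set.ncard_singleton, hη, hσ]
      simp
    · have hset : {X : Finset Pt | X ∈ Duarte ∧
          ∀ q ∈ X, sigmaCfg y Y η ((c,0) + q) = !(sigmaCfg y Y η (c,0))}
          = {({(-1,0),(0,1)} : Finset Pt)} := by
        ext X
        simp only [Set.mem_setOf_eq, Set.mem_singleton_iff]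
        rw [hchar X]
        simp [hη, hσ]
      rw [hset, Set.ncard_singleton, hη, hσ]
      simp
    · have hset : {X : Finset Pt | X ∈ Duarte ∧
          ∀ q ∈ X, sigmaCfg y Y η ((c,0) + q) = !(sigmaCfg y Y η (c,0))} = ∅ := by
        ext X
        simp only [Set.mem_setOf_eq, Set.mem_empty_iff_false, iff_false]
        rw [hchar X]
        simp [hη, hσ]
      rw [hset, Set.ncard_empty, hη, hσ]
      simp
  -- reduce the sums to cards over range L
  have hsum : ∀ s : Bool,
      ∑ v ∈ Y.filter (fun v => η v = s), rval Duarte y Y η v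
      = ((range L).filter (fun j => η (p j) = s ∧
          sigmaCfg y Y η (z₀.1 + (j:ℤ) * ε - 1, 0) = !s)).card := by
    intro s
    have step1 : ∑ v ∈ Y.filter (fun v => η v = s), rval Duarte y Y η v
        = ∑ v ∈ Y.filter (fun v => η v = s),
            (if sigmaCfg y Y η (v.1 - 1, 0) = !s then 1 else 0) := by
      apply Finset.sum_congr rfl
      intro v hv
      rw [Finset.mem_filter] at hv
      obtain ⟨hvY, hvs⟩ := hv
      have hveq : v = (v.1, 0) := by
        have := hsnd v hvY
        exact Prod.ext_iff.mpr ⟨rfl, this⟩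
      rw [hveq] at hvY hvs ⊢
      rw [hrv v.1 hvY, hvs]
    rw [step1, ← Finset.card_filter, Finset.filter_filter, hYim, Finset.filter_image,
      Finset.card_image_of_injOn (fun a _ b _ hab => hInj a b hab)]
  -- identify left-neighbour states, by cases on ε
  have hbmem : ∀ j, j < L → (p j ∈ Y) := by
    intro j hj; rw [hmemY]; exact ⟨j, hj, rfl⟩
  set b : ℕ → Bool := fun j => η (p j) with hb
  rcases hw1 with hε1 | hε1
  · -- ε = 1 : left neighbour of p j is p (j-1)
    have hleft : ∀ j : ℕ, j < L → sigmaCfg y Y η (z₀.1 + (j:ℤ) * ε - 1, 0)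
        = (if 1 ≤ j then b (j-1) else true) := by
      intro j hj
      rcases Nat.eq_zero_or_pos j with h0 | h0
      · subst h0
        rw [if_neg (by omega : ¬ (1:ℕ) ≤ 0)]
        apply hs0out
        rw [hmemY]
        rintro ⟨j', hj', hj'eq⟩
        have : z₀.1 + (0:ℤ) * ε - 1 = z₀.1 + (j':ℤ) * ε := congrArg Prod.fst hj'eq
        rw [hε1] at this
        omega
      · rw [if_pos (by omega : 1 ≤ j)]
        have heq : ((z₀.1 + (j:ℤ) * ε - 1, 0) : Pt) = p (j-1) := by
          refine Prod.ext_iff.mpr ⟨?_, rfl⟩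
          show z₀.1 + (j:ℤ) * ε - 1 = z₀.1 + ((j-1:ℕ):ℤ) * ε
          rw [hε1]
          have hc : ((j-1 : ℕ) : ℤ) = (j:ℤ) - 1 := by omega
          rw [hc]; ring
        rw [heq]
        exact hs0in _ (by rw [show ((z₀.1 + ((j-1:ℕ):ℤ) * ε, 0) : Pt) = p (j-1) from rfl]
                          exact hbmem _ (by omega))
    calc ∑ v ∈ Y.filter (fun v => η v = true), rval Duarte y Y η v
        = ((range L).filter (fun j => b j = true ∧ 1 ≤ j ∧ b (j-1) = false)).card := by
          rw [hsum true]
          congr 1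
          apply Finset.filter_congr
          intro j hj
          rw [mem_range] at hj
          rw [hleft j hj]
          rcases Nat.eq_zero_or_pos j with h0 | h0
          · subst h0; simp
          · simp [h0, hb]
      _ ≤ ((range L).filter (fun j => b j = false ∧ (j = 0 ∨ b (j-1) = true))).card :=
          key b L
      _ = ∑ v ∈ Y.filter (fun v => η v = false), rval Duarte y Y η v := by
          rw [hsum false]
          congr 1
          apply (Finset.filter_congr _).symm
          intro j hj
          rw [mem_range] at hj
          rw [hleft j hj]
          rcases Nat.eq_zero_or_pos j with h0 | h0
          · subst h0; simp [hb]
          · simp [h0, Nat.pos_iff_ne_zero.mp h0, hb]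
  · -- ε = -1 : left neighbour of p j is p (j+1)
    have hleft : ∀ j : ℕ, j < L → sigmaCfg y Y η (z₀.1 + (j:ℤ) * ε - 1, 0)
        = (if j + 1 < L then b (j+1) else true) := by
      intro j hj
      have heq : ((z₀.1 + (j:ℤ) * ε - 1, 0) : Pt) = p (j+1) := by
        refine Prod.ext_iff.mpr ⟨?_, rfl⟩
        show z₀.1 + (j:ℤ) * ε - 1 = z₀.1 + ((j+1:ℕ):ℤ) * ε
        rw [hε1]; push_cast; ring
      rw [heq]
      rcases Nat.lt_or_ge (j+1) L with h1 | h1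
      · rw [if_pos h1]
        exact hs0in _ (hbmem _ h1)
      · rw [if_neg (by omega)]
        apply hs0out
        rw [hmemY]
        rintro ⟨j', hj', hj'eq⟩
        have h2 : z₀.1 + ((j+1:ℕ):ℤ) * ε = z₀.1 + (j':ℤ) * ε := congrArg Prod.fst hj'eq
        rw [hε1] at h2
        have : (j:ℤ) + 1 = (j':ℤ) := by push_cast at h2; omega
        omega
    calc ∑ v ∈ Y.filter (fun v => η v = true), rval Duarte y Y η v
        = ((range L).filter (fun j => b j = true ∧ j+1 < L ∧ b (j+1) = false)).card := by
          rw [hsum true]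
          congr 1
          apply Finset.filter_congr
          intro j hj
          rw [mem_range] at hj
          rw [hleft j hj]
          rcases Nat.lt_or_ge (j+1) L with h1 | h1
          · simp [h1, hb]
          · simp [h1, show ¬ (j+1 < L) by omega]
      _ ≤ ((range L).filter (fun j => b j = false ∧ (j+1 = L ∨ b (j+1) = true))).card :=
          key' b L
      _ = ∑ v ∈ Y.filter (fun v => η v = false), rval Duarte y Y η v := by
          rw [hsum false]
          congr 1
          apply (Finset.filter_congr _).symm
          intro j hj
          rw [mem_range] at hj
          rw [hleft j hj]
          rcases Nat.lt_or_ge (j+1) L with h1 | h1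
          · simp [h1, show ¬ (j+1 = L) by omega, hb]
          · simp [show j+1 = L by omega, show ¬ (j+1 < L) by omega, hb]
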